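/- Let l = 2, d ≥ 2, β ∈ (0, 1/d), ρ ∈ (0, β), and θ ∈ (max{0, 4β - 2ρ - 2/d}, 2β - 2ρ). Then the Hessian matrix of Ψ (with l = 2) at (ρ,θ) is negative definite. -/

import Mathlib

open Real Matrix

set_option maxHeartbeats 1000000

/-- For `l = 2`, the Hessian matrix of `Ψ` is negative definite on the admissible region:
with `A = -1/ρ + 1/(1-2β+ρ) + 2/(β-ρ)`, `B = -2/(β-ρ-θ/2) - d/(1-2βd+ρd+θd/2)`,
`C = -1/θ`, the matrix `![![A+2B, B], ![B, C+B/2]]` is negative definite. -/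
theorem hessian_negdef_l_eq_two (d : ℕ) (hd : 2 ≤ d)
    (β ρ θ : ℝ) (hβ : β ∈ Set.Ioo (0 : ℝ) (1 / d)) (hρ : ρ ∈ Set.Ioo (0 : ℝ) β)
    (hθ : θ ∈ Set.Ioo (max 0 (4 * β - 2 * ρ - 2 / d)) (2 * β - 2 * ρ))
    (A B C : ℝ)
    (hA : A = -1 / ρ + 1 / (1 - 2 * β + ρ) + 2 / (β - ρ))
    (hB : B = -2 / (β - ρ - θ / 2) - (d : ℝ) / (1 - 2 * β * d + ρ * d + θ * d / 2))
    (hC : C = -1 / θ) :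
    (-(Matrix.of ![![A + 2 * B, B], ![B, C + B / 2]])).PosDef := by
  obtain ⟨hβ0, hβ1⟩ := hβ
  obtain ⟨hθl, hθu⟩ := hθ
  obtain ⟨hρ0, hρβ⟩ := hρ
  rw [max_lt_iff] at hθl
  obtain ⟨hθ0, hθl⟩ := hθl
  have hd0 : (0:ℝ) < d := by positivity
  have hd2 : (2:ℝ) ≤ d := by exact_mod_cast hd
  have hβd : β * d < 1 := (lt_div_iff₀ hd0).mp hβ1
  have h2d : (2 / (d:ℝ)) * d = 2 := by field_simp
  have hdd' : (4 * β - 2 * ρ) * d - 2 < θ * d := by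
    nlinarith [mul_lt_mul_of_pos_right hθl hd0]
  -- positive denominators
  set r : ℝ := β - ρ with hr_def
  set s : ℝ := β - ρ - θ / 2 with hs_def
  set t : ℝ := 1 - 2 * β * d + ρ * d + θ * d / 2 with ht_def
  have hr : 0 < r := by rw [hr_def]; linarith
  have hs : 0 < s := by rw [hs_def]; linarith
  have hsr : s < r := by rw [hs_def, hr_def]; linarith
  have hq : 0 < 1 - 2 * β + ρ := by nlinarith
  have ht : 0 < t := by rw [ht_def]; nlinarith
  -- u = -B
  set u : ℝ := 2 / s + (d : ℝ) / t with hu_def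
  have hBu : B = -u := by rw [hB, hu_def]; ring
  clear_value r s t u
  have hu : 0 < u := by rw [hu_def]; positivity
  have hdt : 0 < (d:ℝ) / t := by positivity
  have h2s : 2 / s ≤ u := by rw [hu_def]; linarith
  have hrs : 2 / r < 2 / s := div_lt_div_of_pos_left (by norm_num) hs hsr
  -- A < 2 / r
  have hA2 : A < 2 / r := by
    rw [hA]
    have h1 : 1 / (1 - 2 * β + ρ) < 1 / ρ := by
      apply one_div_lt_one_div_of_lt hρ0
      nlinarith
    have h2 : -1 / ρ = -(1/ρ) := by ring
    rw [h2]
    linarith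
  -- a := -(A + 2B) > 0
  have ha : 0 < -(A + 2 * B) := by
    rw [hBu]; nlinarith [hA2, hrs, h2s, hu]
  -- c := -(C + B/2) > 0
  have hc : 0 < -(C + B / 2) := by
    rw [hBu, hC]
    have h1 : 0 < 1 / θ := by positivity
    have h2 : -1/θ = -(1/θ) := by ring
    rw [h2]; nlinarith [h1, hu]
  -- key inequality for the determinant
  have hθrs : θ = 2 * r - 2 * s := by rw [hr_def, hs_def]; ring
  have hsu : s * u = 2 + s * (d:ℝ) / t := by
    rw [hu_def]; field_simp
  have h1u : 0 < 1 + θ * u / 2 := by positivity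
  have hbr : 2 / r * (1 + θ * u / 2) < 2 * u := by
    rw [div_mul_eq_mul_div, div_lt_iff₀ hr]
    have hst : 0 < s * (d:ℝ) / t := by positivity
    nlinarith [hsu, hst]
  have hkey : A * (1 + θ * u / 2) < 2 * u :=
    lt_of_le_of_lt (by nlinarith [hA2, h1u] : A * (1 + θ * u / 2) ≤ 2 / r * (1 + θ * u / 2)) hbr
  -- determinant
  have hdet : 0 < (-(A + 2 * B)) * (-(C + B / 2)) - B ^ 2 := by
    have hexp : (-(A + 2 * B)) * (-(C + B / 2)) - B ^ 2
        = (2 * u - A * (1 + θ * u / 2)) / θ := by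
      rw [hBu, hC]
      field_simp
      ring
    rw [hexp]
    exact div_pos (by linarith) hθ0
  -- conclude PosDef
  rw [Matrix.posDef_iff_dotProduct_mulVec]
  constructor
  · rw [Matrix.IsHermitian]
    ext i j
    fin_cases i <;> fin_cases j <;>
      simp [Matrix.conjTranspose_apply]
  · intro x hx
    have hx' : x 0 ≠ 0 ∨ x 1 ≠ 0 := by
      by_contra h
      push_neg at h
      apply hx
      funext i
      fin_cases i <;> simp [h.1, h.2]
    have hform : dotProduct (star x) ((-(Matrix.of ![![A + 2 * B, B], ![B, C + B / 2]])) *ᵥ x)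
        = (-(A + 2 * B)) * (x 0)^2 + 2 * (-B) * (x 0) * (x 1) + (-(C + B / 2)) * (x 1)^2 := by
      simp [dotProduct, Matrix.mulVec, Fin.sum_univ_two]
      ring
    rw [hform]
    rcases hx' with h0 | h1
    · nlinarith [sq_nonneg ((-B) * x 0 + (-(C + B / 2)) * x 1),
        mul_pos hdet (sq_pos_of_ne_zero h0), hc, ha]
    · nlinarith [sq_nonneg ((-(A + 2 * B)) * x 0 + (-B) * x 1),
        mul_pos hdet (sq_pos_of_ne_zero h1), ha, hc]
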